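/- Performance-difference-type identity for the square value: for any bounded f : S → ℝ, J_S(π) = ⟨ρ, f⟩ + (1/(1−γ²))·⟨d₂^π, δ_f^π⟩, where δ_f^π(s) = E_{π,P}[C(s,a,s')² + γ²f(s') − f(s) + 2γ·C(s,a,s')·V_C^π(s')] and d₂^π(s) = (1−γ²)·Σ_{t=0}^∞ γ^{2t}·P(s_t = s | ρ, π). -/

import Mathlib

set_option linter.unusedSectionVars false
set_option linter.unusedVariables false


open Finset

/-- The state at time `t` along a trajectory starting at `s0` whose `t`-th transition is
`w t = (aₜ, sₜ₊₁)`. -/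
def stSeq {S A : Type*} (s0 : S) (w : ℕ → A × S) : ℕ → S
  | 0 => s0
  | t + 1 => (w t).2

/-- Extend a finite path `w : Fin n → A × S` to an infinite sequence by a default value. -/
def extPath {S A : Type*} [Inhabited S] [Inhabited A] (n : ℕ) (w : Fin n → A × S) :
    ℕ → A × S :=
  fun t => if h : t < n then w ⟨t, h⟩ else default

/-- Probability weight of the first `n` steps of the trajectory `w` from `s0` under policy
`π` and transition kernel `P`. -/
def pathWt {S A : Type*} (π : S → A → ℝ) (P : S → A → S → ℝ) (s0 : S)
    (w : ℕ → A × S) (n : ℕ) : ℝ :=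
  ∏ t ∈ Finset.range n, π (stSeq s0 w t) (w t).1 * P (stSeq s0 w t) (w t).1 (w t).2

/-- Discounted cost accumulated over the first `n` steps of the trajectory `w` from `s0`. -/
def pathCost {S A : Type*} (C : S → A → S → ℝ) (γ : ℝ) (s0 : S)
    (w : ℕ → A × S) (n : ℕ) : ℝ :=
  ∑ t ∈ Finset.range n, γ ^ t * C (stSeq s0 w t) (w t).1 (w t).2

/-- `n`-horizon expectation of the discounted cost sum from `s0`. -/
def cExp {S A : Type*} [Fintype S] [Fintype A] [Inhabited S] [Inhabited A]
    (π : S → A → ℝ) (P : S → A → S → ℝ) (C : S → A → S → ℝ) (γ : ℝ)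
    (n : ℕ) (s0 : S) : ℝ :=
  ∑ w : Fin n → A × S,
    pathWt π P s0 (extPath n w) n * pathCost C γ s0 (extPath n w) n

/-- `n`-horizon expectation of the squared discounted cost sum from `s0`. -/
def sqExp {S A : Type*} [Fintype S] [Fintype A] [Inhabited S] [Inhabited A]
    (π : S → A → ℝ) (P : S → A → S → ℝ) (C : S → A → S → ℝ) (γ : ℝ)
    (n : ℕ) (s0 : S) : ℝ :=
  ∑ w : Fin n → A × S,
    pathWt π P s0 (extPath n w) n * (pathCost C γ s0 (extPath n w) n) ^ 2



section
variable {S A : Type*} [Inhabited S] [Inhabited A]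

lemma extPath_cons_zero (n : ℕ) (p : A × S) (w : Fin n → A × S) :
    extPath (n + 1) (Fin.cons p w) 0 = p := by
  simp [extPath]

lemma extPath_cons_succ (n : ℕ) (p : A × S) (w : Fin n → A × S) {t : ℕ} (h : t < n) :
    extPath (n + 1) (Fin.cons p w) (t + 1) = extPath n w t := by
  simp only [extPath, dif_pos (Nat.succ_lt_succ h), dif_pos h]
  exact Fin.cons_succ (α := fun _ : Fin (n+1) => A × S) p w ⟨t, h⟩

lemma stSeq_cons (n : ℕ) (s0 : S) (a : A) (s' : S) (w : Fin n → A × S) {t : ℕ} (h : t < n) :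
    stSeq s0 (extPath (n + 1) (Fin.cons (a, s') w)) (t + 1)
      = stSeq s' (extPath n w) t := by
  cases t with
  | zero => simp [stSeq, extPath_cons_zero]
  | succ k =>
    have hk : k < n := Nat.lt_of_succ_lt h
    simp only [stSeq, extPath_cons_succ n _ w hk]

lemma pathWt_cons (π : S → A → ℝ) (P : S → A → S → ℝ) (n : ℕ) (s0 : S) (a : A) (s' : S)
    (w : Fin n → A × S) :
    pathWt π P s0 (extPath (n + 1) (Fin.cons (a, s') w)) (n + 1)
      = π s0 a * P s0 a s' * pathWt π P s' (extPath n w) n := by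
  unfold pathWt
  rw [Finset.prod_range_succ']
  have h0 : stSeq s0 (extPath (n + 1) (Fin.cons (a, s') w)) 0 = s0 := rfl
  rw [h0, extPath_cons_zero]
  rw [mul_comm]
  congr 1
  refine Finset.prod_congr rfl fun t ht => ?_
  have h : t < n := Finset.mem_range.mp ht
  rw [stSeq_cons n s0 a s' w h, extPath_cons_succ n _ w h]

lemma pathCost_cons (C : S → A → S → ℝ) (γ : ℝ) (n : ℕ) (s0 : S) (a : A) (s' : S)
    (w : Fin n → A × S) :
    pathCost C γ s0 (extPath (n + 1) (Fin.cons (a, s') w)) (n + 1)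
      = C s0 a s' + γ * pathCost C γ s' (extPath n w) n := by
  unfold pathCost
  rw [Finset.sum_range_succ']
  have h0 : stSeq s0 (extPath (n + 1) (Fin.cons (a, s') w)) 0 = s0 := rfl
  rw [h0, extPath_cons_zero]
  rw [add_comm, Finset.mul_sum]
  simp only [pow_zero, one_mul]
  congr 1
  refine Finset.sum_congr rfl fun t ht => ?_
  have h : t < n := Finset.mem_range.mp ht
  rw [stSeq_cons n s0 a s' w h, extPath_cons_succ n _ w h]
  ring

lemma sum_path_succ (n : ℕ) [Fintype S] [Fintype A] (F : (Fin (n + 1) → A × S) → ℝ) :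
    ∑ w : Fin (n + 1) → A × S, F w
      = ∑ a : A, ∑ s' : S, ∑ w : Fin n → A × S, F (Fin.cons (a, s') w) := by
  rw [← Equiv.sum_comp (Fin.consEquiv (fun _ : Fin (n + 1) => A × S)) F]
  rw [Fintype.sum_prod_type, Fintype.sum_prod_type]
  rfl

variable [Fintype S] [Fintype A]
variable (π : S → A → ℝ) (P : S → A → S → ℝ) (C : S → A → S → ℝ) (γ : ℝ)

lemma pathWt_total (hπ1 : ∀ s, ∑ a, π s a = 1) (hP1 : ∀ s a, ∑ s', P s a s' = 1) (n : ℕ) :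
    ∀ s0 : S, ∑ w : Fin n → A × S, pathWt π P s0 (extPath n w) n = 1 := by
  induction n with
  | zero =>
    intro s0
    simp [pathWt]
  | succ n ih =>
    intro s0
    rw [sum_path_succ]
    have : ∀ a : A, ∀ s' : S,
        (∑ w : Fin n → A × S, pathWt π P s0 (extPath (n+1) (Fin.cons (a, s') w)) (n+1))
          = π s0 a * P s0 a s' := by
      intro a s'
      simp only [pathWt_cons]
      rw [← Finset.mul_sum, ih s', mul_one]
    calc ∑ a : A, ∑ s' : S, ∑ w : Fin n → A × S,
          pathWt π P s0 (extPath (n+1) (Fin.cons (a, s') w)) (n+1)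
        = ∑ a : A, ∑ s' : S, π s0 a * P s0 a s' := by
          exact Finset.sum_congr rfl fun a _ => Finset.sum_congr rfl fun s' _ => this a s'
      _ = 1 := by
          simp only [← Finset.mul_sum]
          simp only [hP1, mul_one, hπ1]

lemma cExp_succ (hπ1 : ∀ s, ∑ a, π s a = 1) (hP1 : ∀ s a, ∑ s', P s a s' = 1) (n : ℕ) (s0 : S) :
    cExp π P C γ (n + 1) s0
      = ∑ a, π s0 a * ∑ s', P s0 a s' * (C s0 a s' + γ * cExp π P C γ n s') := by
  unfold cExp
  rw [sum_path_succ]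
  refine Finset.sum_congr rfl fun a _ => ?_
  rw [Finset.mul_sum]
  refine Finset.sum_congr rfl fun s' _ => ?_
  simp only [pathWt_cons, pathCost_cons]
  have expand : ∀ w : Fin n → A × S,
      π s0 a * P s0 a s' * pathWt π P s' (extPath n w) n *
        (C s0 a s' + γ * pathCost C γ s' (extPath n w) n)
      = π s0 a * P s0 a s' *
          (C s0 a s' * pathWt π P s' (extPath n w) n
            + γ * (pathWt π P s' (extPath n w) n * pathCost C γ s' (extPath n w) n)) := by
    intro w; ring
  rw [Finset.sum_congr rfl fun w _ => expand w, ← Finset.mul_sum, Finset.sum_add_distrib,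
    ← Finset.mul_sum, ← Finset.mul_sum, pathWt_total π P hπ1 hP1 n s', mul_one]
  ring

lemma sqExp_succ (hπ1 : ∀ s, ∑ a, π s a = 1) (hP1 : ∀ s a, ∑ s', P s a s' = 1) (n : ℕ) (s0 : S) :
    sqExp π P C γ (n + 1) s0
      = ∑ a, π s0 a * ∑ s', P s0 a s' *
          (C s0 a s' ^ 2 + 2 * γ * C s0 a s' * cExp π P C γ n s'
            + γ ^ 2 * sqExp π P C γ n s') := by
  unfold sqExp
  rw [sum_path_succ]
  refine Finset.sum_congr rfl fun a _ => ?_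
  rw [Finset.mul_sum]
  refine Finset.sum_congr rfl fun s' _ => ?_
  simp only [pathWt_cons, pathCost_cons]
  have expand : ∀ w : Fin n → A × S,
      π s0 a * P s0 a s' * pathWt π P s' (extPath n w) n *
        (C s0 a s' + γ * pathCost C γ s' (extPath n w) n) ^ 2
      = π s0 a * P s0 a s' *
          (C s0 a s' ^ 2 * pathWt π P s' (extPath n w) n
            + 2 * γ * C s0 a s' *
                (pathWt π P s' (extPath n w) n * pathCost C γ s' (extPath n w) n)
            + γ ^ 2 * (pathWt π P s' (extPath n w) n * pathCost C γ s' (extPath n w) n ^ 2)) := by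
    intro w; ring
  rw [Finset.sum_congr rfl fun w _ => expand w, ← Finset.mul_sum, Finset.sum_add_distrib,
    Finset.sum_add_distrib, ← Finset.mul_sum, ← Finset.mul_sum, ← Finset.mul_sum,
    pathWt_total π P hπ1 hP1 n s', mul_one]
  simp only [cExp, sqExp]
  ring

lemma bellman_sq (π : S → A → ℝ) (P : S → A → S → ℝ) (C : S → A → S → ℝ) (γ : ℝ)
    (cE sE : ℕ → S → ℝ)
    (hrec : ∀ n s0, sE (n + 1) s0
      = ∑ a, π s0 a * ∑ s', P s0 a s' *
          (C s0 a s' ^ 2 + 2 * γ * C s0 a s' * cE n s' + γ ^ 2 * sE n s'))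
    (VC SC : S → ℝ)
    (hVC : ∀ s, Filter.Tendsto (fun n => cE n s) Filter.atTop (nhds (VC s)))
    (hSC : ∀ s, Filter.Tendsto (fun n => sE n s) Filter.atTop (nhds (SC s)))
    (s : S) :
    SC s = ∑ a, π s a * ∑ s', P s a s' *
        (C s a s' ^ 2 + 2 * γ * C s a s' * VC s' + γ ^ 2 * SC s') := by
  have h1 : Filter.Tendsto (fun n => sE (n + 1) s) Filter.atTop (nhds (SC s)) :=
    (hSC s).comp (Filter.tendsto_add_atTop_nat 1)
  have h2 : Filter.Tendsto
      (fun n => ∑ a, π s a * ∑ s', P s a s' *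
        (C s a s' ^ 2 + 2 * γ * C s a s' * cE n s' + γ ^ 2 * sE n s'))
      Filter.atTop
      (nhds (∑ a, π s a * ∑ s', P s a s' *
        (C s a s' ^ 2 + 2 * γ * C s a s' * VC s' + γ ^ 2 * SC s'))) := by
    refine tendsto_finset_sum _ fun a _ => ?_
    refine Filter.Tendsto.const_mul _ ?_
    refine tendsto_finset_sum _ fun s' _ => ?_
    refine Filter.Tendsto.const_mul _ ?_
    exact (tendsto_const_nhds.add ((hVC s').const_mul _)).add ((hSC s').const_mul _)
  have h3 : (fun n => sE (n + 1) s)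
      = fun n => ∑ a, π s a * ∑ s', P s a s' *
          (C s a s' ^ 2 + 2 * γ * C s a s' * cE n s' + γ ^ 2 * sE n s') := by
    funext n; exact hrec n s
  rw [h3] at h1
  exact tendsto_nhds_unique h1 h2

end


/-- Performance-difference-type identity for the square value: for any `f : S → ℝ`,
`J_S(π) = ⟨ρ, f⟩ + (1/(1-γ²))·⟨d₂^π, δ_f^π⟩`, where
`δ_f^π(s) = E_{π,P}[C(s,a,s')² + γ²f(s') - f(s) + 2γ·C(s,a,s')·V_C^π(s')]`,
`J_S(π) = E_{s∼ρ}[S_C^π(s)]`, and `d₂^π` is the doubly discounted state distribution. -/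
theorem square_value_performance_difference {S A : Type*} [Fintype S] [Fintype A]
    [Inhabited S] [Inhabited A]
    (π : S → A → ℝ) (P : S → A → S → ℝ) (C : S → A → S → ℝ) (ρ : S → ℝ) (γ : ℝ)
    (hπ0 : ∀ s a, 0 ≤ π s a) (hπ1 : ∀ s, ∑ a, π s a = 1)
    (hP0 : ∀ s a s', 0 ≤ P s a s') (hP1 : ∀ s a, ∑ s', P s a s' = 1)
    (hρ0 : ∀ s, 0 ≤ ρ s) (hρ1 : ∑ s, ρ s = 1)
    (hC0 : ∀ s a s', 0 ≤ C s a s') (hCb : ∃ M, ∀ s a s', C s a s' ≤ M)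
    (hγ : γ ∈ Set.Ioo (0 : ℝ) 1)
    (VC SC : S → ℝ)
    (hVC : ∀ s, Filter.Tendsto (fun n => cExp π P C γ n s) Filter.atTop (nhds (VC s)))
    (hSC : ∀ s, Filter.Tendsto (fun n => sqExp π P C γ n s) Filter.atTop (nhds (SC s)))
    (m : ℕ → S → ℝ) (hm0 : ∀ s, m 0 s = ρ s)
    (hmsucc : ∀ t s', m (t + 1) s' = ∑ s, m t s * ∑ a, π s a * P s a s')
    (d2 : S → ℝ) (hd2 : ∀ s, d2 s = (1 - γ ^ 2) * ∑' t : ℕ, (γ ^ 2) ^ t * m t s)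
    (f : S → ℝ) :
    ∑ s, ρ s * SC s =
      (∑ s, ρ s * f s) + (1 / (1 - γ ^ 2)) *
        ∑ s, d2 s * ∑ a, π s a * ∑ s', P s a s' *
          (C s a s' ^ 2 + γ ^ 2 * f s' - f s + 2 * γ * C s a s' * VC s') := by

  have hγ0 : (0:ℝ) < γ := hγ.1
  have hγ1 : γ < 1 := hγ.2
  have hγ2lt : γ ^ 2 < 1 := by nlinarith
  have hγ2nn : (0:ℝ) ≤ γ ^ 2 := sq_nonneg γ
  have h1γ2 : (1:ℝ) - γ ^ 2 ≠ 0 := by nlinarith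
  -- properties of the state distribution m
  have hm_nonneg : ∀ t s, 0 ≤ m t s := by
    intro t
    induction t with
    | zero => intro s; rw [hm0]; exact hρ0 s
    | succ t ih =>
      intro s'
      rw [hmsucc]
      exact Finset.sum_nonneg fun s _ => mul_nonneg (ih s)
        (Finset.sum_nonneg fun a _ => mul_nonneg (hπ0 s a) (hP0 s a s'))
  have hm_sum : ∀ t, ∑ s, m t s = 1 := by
    intro t
    induction t with
    | zero => simp [hm0, hρ1]
    | succ t ih =>
      calc ∑ s', m (t + 1) s' = ∑ s', ∑ s, m t s * ∑ a, π s a * P s a s' :=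
            Finset.sum_congr rfl fun s' _ => hmsucc t s'
        _ = ∑ s, m t s * ∑ a, π s a * ∑ s', P s a s' := by
            rw [Finset.sum_comm]
            refine Finset.sum_congr rfl fun s _ => ?_
            rw [← Finset.mul_sum]
            congr 1
            rw [Finset.sum_comm]
            exact Finset.sum_congr rfl fun a _ => (Finset.mul_sum _ _ _).symm
        _ = 1 := by simp [hP1, hπ1, ih]
  have hm_le1 : ∀ t s, m t s ≤ 1 := by
    intro t s
    calc m t s ≤ ∑ s', m t s' :=
          Finset.single_le_sum (fun i _ => hm_nonneg t i) (Finset.mem_univ s)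
      _ = 1 := hm_sum t
  -- Bellman equation for SC
  have hBell : ∀ s, SC s = ∑ a, π s a * ∑ s', P s a s' *
      (C s a s' ^ 2 + 2 * γ * C s a s' * VC s' + γ ^ 2 * SC s') :=
    fun s => bellman_sq π P C γ (cExp π P C γ) (sqExp π P C γ)
      (fun n s0 => sqExp_succ π P C γ hπ1 hP1 n s0) VC SC hVC hSC s
  set g : S → ℝ := fun s => SC s - f s with hgdef
  set T : S → ℝ := fun s => ∑ a, π s a * ∑ s', P s a s' * g s' with hTdef
  have hδ : ∀ s, (∑ a, π s a * ∑ s', P s a s' *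
      (C s a s' ^ 2 + γ ^ 2 * f s' - f s + 2 * γ * C s a s' * VC s'))
      = g s - γ ^ 2 * T s := by
    intro s
    have e1 : ∀ a, (∑ s', P s a s' *
          (C s a s' ^ 2 + γ ^ 2 * f s' - f s + 2 * γ * C s a s' * VC s'))
        = (∑ s', P s a s' * (C s a s' ^ 2 + 2 * γ * C s a s' * VC s' + γ ^ 2 * SC s'))
          - γ ^ 2 * (∑ s', P s a s' * g s') - f s := by
      intro a
      have ptwise : ∀ s', P s a s' *
            (C s a s' ^ 2 + γ ^ 2 * f s' - f s + 2 * γ * C s a s' * VC s')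
          = P s a s' * (C s a s' ^ 2 + 2 * γ * C s a s' * VC s' + γ ^ 2 * SC s')
            - γ ^ 2 * (P s a s' * g s') - P s a s' * f s := by
        intro s'; simp only [hgdef]; ring
      rw [Finset.sum_congr rfl fun s' _ => ptwise s']
      rw [Finset.sum_sub_distrib, Finset.sum_sub_distrib, ← Finset.mul_sum,
        ← Finset.sum_mul, hP1, one_mul]
    rw [Finset.sum_congr rfl fun a _ => by rw [e1 a]]
    have ptwise2 : ∀ a : A, π s a *
          ((∑ s', P s a s' * (C s a s' ^ 2 + 2 * γ * C s a s' * VC s' + γ ^ 2 * SC s'))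
            - γ ^ 2 * (∑ s', P s a s' * g s') - f s)
        = π s a * (∑ s', P s a s' *
              (C s a s' ^ 2 + 2 * γ * C s a s' * VC s' + γ ^ 2 * SC s'))
          - γ ^ 2 * (π s a * ∑ s', P s a s' * g s') - π s a * f s := by
      intro a; ring
    rw [Finset.sum_congr rfl fun a _ => ptwise2 a]
    rw [Finset.sum_sub_distrib, Finset.sum_sub_distrib, ← Finset.mul_sum,
      ← Finset.sum_mul, hπ1, one_mul, ← hBell s]
    simp only [hTdef, hgdef]
    ring
  have hstep : ∀ t, ∑ s, m t s * T s = ∑ s', m (t + 1) s' * g s' := by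
    intro t
    calc ∑ s, m t s * T s
        = ∑ s, ∑ a, ∑ s', m t s * (π s a * (P s a s' * g s')) := by
          refine Finset.sum_congr rfl fun s _ => ?_
          simp only [hTdef, Finset.mul_sum]
      _ = ∑ s', ∑ s, ∑ a, m t s * (π s a * (P s a s' * g s')) := by
          have h1 : ∀ s : S, (∑ a : A, ∑ s' : S, m t s * (π s a * (P s a s' * g s')))
              = ∑ s' : S, ∑ a : A, m t s * (π s a * (P s a s' * g s')) :=
            fun s => Finset.sum_comm
          rw [Finset.sum_congr rfl fun s _ => h1 s]
          exact Finset.sum_comm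
      _ = ∑ s', (∑ s, m t s * ∑ a, π s a * P s a s') * g s' := by
          refine Finset.sum_congr rfl fun s' _ => ?_
          rw [Finset.sum_mul]
          refine Finset.sum_congr rfl fun s _ => ?_
          rw [Finset.mul_sum, Finset.sum_mul]
          exact Finset.sum_congr rfl fun a _ => by ring
      _ = ∑ s', m (t + 1) s' * g s' := by
          refine Finset.sum_congr rfl fun s' _ => ?_
          rw [hmsucc]
  set u : ℕ → ℝ := fun t => ∑ s, m t s * g s with hudef
  have hv : ∀ t, ∑ s, m t s * (g s - γ ^ 2 * T s) = u t - γ ^ 2 * u (t + 1) := by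
    intro t
    rw [Finset.sum_congr rfl fun s (_ : s ∈ Finset.univ) =>
        (by ring : m t s * (g s - γ ^ 2 * T s) = m t s * g s - γ ^ 2 * (m t s * T s)),
      Finset.sum_sub_distrib, ← Finset.mul_sum, hstep t]
  have hsum_u : Summable (fun t => (γ ^ 2) ^ t * u t) := by
    refine Summable.of_norm_bounded (g := fun t => (γ ^ 2) ^ t * ∑ s, |g s|)
      ((summable_geometric_of_lt_one hγ2nn hγ2lt).mul_right _) fun t => ?_
    have hub : |u t| ≤ ∑ s, |g s| := by
      simp only [hudef]
      refine le_trans (Finset.abs_sum_le_sum_abs _ _) (Finset.sum_le_sum fun s _ => ?_)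
      rw [abs_mul, abs_of_nonneg (hm_nonneg t s)]
      calc m t s * |g s| ≤ 1 * |g s| :=
            mul_le_mul_of_nonneg_right (hm_le1 t s) (abs_nonneg _)
        _ = |g s| := one_mul _
    rw [Real.norm_eq_abs, abs_mul, abs_of_nonneg (pow_nonneg hγ2nn t)]
    exact mul_le_mul_of_nonneg_left hub (pow_nonneg hγ2nn t)
  have hsum_m : ∀ s, Summable (fun t => (γ ^ 2) ^ t * m t s) := by
    intro s
    refine Summable.of_nonneg_of_le
      (fun t => mul_nonneg (pow_nonneg hγ2nn t) (hm_nonneg t s)) (fun t => ?_)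
      (summable_geometric_of_lt_one hγ2nn hγ2lt)
    calc (γ ^ 2) ^ t * m t s ≤ (γ ^ 2) ^ t * 1 :=
          mul_le_mul_of_nonneg_left (hm_le1 t s) (pow_nonneg hγ2nn t)
      _ = (γ ^ 2) ^ t := mul_one _
  have hsum_u' : Summable (fun t => (γ ^ 2) ^ (t + 1) * u (t + 1)) :=
    (summable_nat_add_iff (f := fun t => (γ ^ 2) ^ t * u t) 1).mpr hsum_u
  have htel : ∑' t : ℕ, ((γ ^ 2) ^ t * u t - (γ ^ 2) ^ (t + 1) * u (t + 1)) = u 0 := by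
    rw [Summable.tsum_sub hsum_u hsum_u', Summable.tsum_eq_zero_add hsum_u]
    ring
  have hδsum : ∑ s, d2 s * (∑ a, π s a * ∑ s', P s a s' *
      (C s a s' ^ 2 + γ ^ 2 * f s' - f s + 2 * γ * C s a s' * VC s'))
      = (1 - γ ^ 2) * u 0 := by
    calc ∑ s, d2 s * (∑ a, π s a * ∑ s', P s a s' *
        (C s a s' ^ 2 + γ ^ 2 * f s' - f s + 2 * γ * C s a s' * VC s'))
        = ∑ s, (1 - γ ^ 2) * ((∑' t : ℕ, (γ ^ 2) ^ t * m t s) * (g s - γ ^ 2 * T s)) := by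
          refine Finset.sum_congr rfl fun s _ => ?_
          rw [hδ s, hd2 s]
          ring
      _ = (1 - γ ^ 2) * ∑ s, ∑' t : ℕ, (γ ^ 2) ^ t * m t s * (g s - γ ^ 2 * T s) := by
          rw [Finset.mul_sum]
          exact Finset.sum_congr rfl fun s _ => by rw [tsum_mul_right]
      _ = (1 - γ ^ 2) * ∑' t : ℕ, ∑ s, (γ ^ 2) ^ t * m t s * (g s - γ ^ 2 * T s) := by
          congr 1
          exact (Summable.tsum_finsetSum fun s _ => (hsum_m s).mul_right _).symm
      _ = (1 - γ ^ 2) * ∑' t : ℕ, ((γ ^ 2) ^ t * u t - (γ ^ 2) ^ (t + 1) * u (t + 1)) := by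
          congr 1
          refine tsum_congr fun t => ?_
          calc ∑ s, (γ ^ 2) ^ t * m t s * (g s - γ ^ 2 * T s)
              = (γ ^ 2) ^ t * ∑ s, m t s * (g s - γ ^ 2 * T s) := by
                rw [Finset.mul_sum]
                exact Finset.sum_congr rfl fun s _ => by ring
            _ = (γ ^ 2) ^ t * (u t - γ ^ 2 * u (t + 1)) := by rw [hv t]
            _ = (γ ^ 2) ^ t * u t - (γ ^ 2) ^ (t + 1) * u (t + 1) := by ring
      _ = (1 - γ ^ 2) * u 0 := by rw [htel]
  have hu0 : u 0 = (∑ s, ρ s * SC s) - ∑ s, ρ s * f s := by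
    simp only [hudef, hgdef, hm0]
    rw [← Finset.sum_sub_distrib]
    exact Finset.sum_congr rfl fun s _ => by ring
  rw [hδsum, hu0]
  field_simp
  ring
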